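/- Fix V ≥ 0 and set ρ = 1/(1 + e + e^{V+1}), Ψ₂ = ln(1 + e^{-1} + e^{V}), and Λ = ln(1 + 2e^{V}). Then the ratio [ 1 + ((1-δ)/(1-δρ))·Ψ₂ + (δ(1-ρ)/(1-δρ))·Λ ] / (1 + Λ) tends to 1 as δ → 1⁻ (δ ranging over [0,1)). Consequently, the p → 0 limit of Util(PEAR) divided by the p → 0 limit of Util(OPT) tends to 1 as δ → 1. -/
import Mathlib


open Real Filter Topology

/-- Asymptotic optimality of PEAR (Corollary 1 of the paper): with
`ρ = 1/(1 + e + e^{V+1})`, `Ψ₂ = ln(1 + e^{-1} + e^V)` and `Λ = ln(1 + 2e^V)`, the ratio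
of the `p → 0` limits of `Util(PEAR)` and `Util(OPT)`, namely
`[1 + ((1-δ)/(1-δρ))Ψ₂ + (δ(1-ρ)/(1-δρ))Λ] / (1 + Λ)`, tends to `1` as `δ → 1⁻` with
`δ` ranging over `[0,1)`. -/
theorem pear_asymptotically_utility_optimal (V : ℝ) (hV : 0 ≤ V) :
    Tendsto (fun δ : ℝ =>
        (1 + ((1 - δ) / (1 - δ * (1 / (1 + Real.exp 1 + Real.exp (V + 1)))))
              * Real.log (1 + Real.exp (-1) + Real.exp V)
          + (δ * (1 - 1 / (1 + Real.exp 1 + Real.exp (V + 1)))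
              / (1 - δ * (1 / (1 + Real.exp 1 + Real.exp (V + 1)))))
              * Real.log (1 + 2 * Real.exp V))
        / (1 + Real.log (1 + 2 * Real.exp V)))
      (𝓝[Set.Ico (0 : ℝ) 1] 1) (𝓝 1) := by
  set D : ℝ := 1 + Real.exp 1 + Real.exp (V + 1) with hD
  have hDpos : 1 < D := by
    have h1 := Real.exp_pos 1
    have h2 := Real.exp_pos (V + 1)
    simp only [hD]; linarith
  have hρ : (1 : ℝ) / D < 1 := by
    rw [div_lt_one (by linarith)]; exact hDpos
  have hρpos : 0 < 1 / D := by positivity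
  have hden : (1 : ℝ) - 1 * (1 / D) ≠ 0 := by nlinarith
  have hΛpos : 0 ≤ Real.log (1 + 2 * Real.exp V) := by
    apply Real.log_nonneg
    have := Real.exp_pos V; linarith
  have hΛ : (1 : ℝ) + Real.log (1 + 2 * Real.exp V) ≠ 0 := by linarith
  have hcont : ContinuousAt (fun δ : ℝ =>
        (1 + ((1 - δ) / (1 - δ * (1 / D)))
              * Real.log (1 + Real.exp (-1) + Real.exp V)
          + (δ * (1 - 1 / D) / (1 - δ * (1 / D)))
              * Real.log (1 + 2 * Real.exp V))
        / (1 + Real.log (1 + 2 * Real.exp V))) 1 := by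
    apply ContinuousAt.div _ continuousAt_const hΛ
    apply ContinuousAt.add
    · apply ContinuousAt.add continuousAt_const
      apply ContinuousAt.mul _ continuousAt_const
      exact ContinuousAt.div (by fun_prop) (by fun_prop) hden
    · apply ContinuousAt.mul _ continuousAt_const
      exact ContinuousAt.div (by fun_prop) (by fun_prop) hden
  have hval : (1 + ((1 - (1:ℝ)) / (1 - 1 * (1 / D)))
              * Real.log (1 + Real.exp (-1) + Real.exp V)
          + ((1:ℝ) * (1 - 1 / D) / (1 - 1 * (1 / D)))
              * Real.log (1 + 2 * Real.exp V))
        / (1 + Real.log (1 + 2 * Real.exp V)) = 1 := by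
    rw [one_mul] at hden
    rw [sub_self, zero_div, zero_mul, one_mul, one_mul, div_self hden, add_zero,
      one_mul, div_self hΛ]
  have := hcont.tendsto.mono_left (nhdsWithin_le_nhds (s := Set.Ico (0:ℝ) 1))
  rw [hval] at this
  exact this
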